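/- Let a_i > 0 and p_i > 0 real, t_n = (a_1 + (a_2 + ... + a_n^{p_n})...)^{p_1}, and define f_0(y) = y, f_k(y) = f_{k-1}(y)^{1/p_k} - a_k. Then for every n ≥ 1, t_{n+1} - t_n ≤ a_{n+1}^{p_{n+1}} · ∏_{i: p_i ≤ 1} p_i·f_{i-1}(t_n)^{(p_i-1)/p_i} · ∏_{i: p_i > 1} p_i·f_{i-1}(t_{n+1})^{(p_i-1)/p_i}, where the products range over 1 ≤ i ≤ n. -/

import Mathlib

/-- `pow_form a p n i = (a i + (a (i+1) + ⋯ + (a n) ^ (p n)) ^ (p (i+1))) ^ (p i)`;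
the `n`-th approximant `t n` of the continued power form is `pow_form a p n 1`. -/
noncomputable def powForm (a : ℕ → ℝ) (p : ℕ → ℝ) (n : ℕ) : ℕ → ℝ
  | i => if _ : i ≤ n then (a i + powForm a p n (i + 1)) ^ (p i) else 0
termination_by i => n + 1 - i
decreasing_by omega

/-- Denesting functions for continued power forms:
`denP a p 0 y = y`, `denP a p k y = (denP a p (k-1) y) ^ (1 / p k) - a k`. -/
noncomputable def denP (a : ℕ → ℝ) (p : ℕ → ℝ) : ℕ → ℝ → ℝ
  | 0, y => y
  | k + 1, y => (denP a p k y) ^ (p (k + 1))⁻¹ - a (k + 1)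

open Real Finset

lemma powForm_of_le (a p : ℕ → ℝ) {n i : ℕ} (h : i ≤ n) :
    powForm a p n i = (a i + powForm a p n (i + 1)) ^ (p i) := by
  rw [powForm]; simp [h]

lemma powForm_of_gt (a p : ℕ → ℝ) {n i : ℕ} (h : ¬ i ≤ n) :
    powForm a p n i = 0 := by
  rw [powForm]; simp [h]

lemma powForm_nonneg_aux (a p : ℕ → ℝ) (ha : ∀ n, 1 ≤ n → 0 < a n) (n : ℕ) :
    ∀ k i, n + 1 - i ≤ k → 1 ≤ i → 0 ≤ powForm a p n i := by
  intro k
  induction k with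
  | zero =>
    intro i h hi
    rw [powForm_of_gt a p (by omega)]
  | succ k ih =>
    intro i h hi
    by_cases hin : i ≤ n
    · rw [powForm_of_le a p hin]
      exact Real.rpow_nonneg (by linarith [ha i hi, ih (i + 1) (by omega) (by omega)]) _
    · rw [powForm_of_gt a p hin]

lemma powForm_nonneg (a p : ℕ → ℝ) (ha : ∀ n, 1 ≤ n → 0 < a n) (n i : ℕ) (hi : 1 ≤ i) :
    0 ≤ powForm a p n i :=
  powForm_nonneg_aux a p ha n (n + 1 - i) i le_rfl hi

lemma powForm_base_pos (a p : ℕ → ℝ) (ha : ∀ n, 1 ≤ n → 0 < a n) (n i : ℕ)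
    (hi : 1 ≤ i) : 0 < a i + powForm a p n (i + 1) := by
  linarith [ha i hi, powForm_nonneg a p ha n (i + 1) (by omega)]

lemma powForm_mono_aux (a p : ℕ → ℝ) (ha : ∀ n, 1 ≤ n → 0 < a n)
    (hp : ∀ n, 1 ≤ n → 0 < p n) (n : ℕ) :
    ∀ k i, n + 2 - i ≤ k → 1 ≤ i → powForm a p n i ≤ powForm a p (n + 1) i := by
  intro k
  induction k with
  | zero =>
    intro i h hi
    rw [powForm_of_gt a p (show ¬ i ≤ n by omega), powForm_of_gt a p (show ¬ i ≤ n + 1 by omega)]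
  | succ k ih =>
    intro i h hi
    by_cases hin : i ≤ n
    · rw [powForm_of_le a p hin, powForm_of_le a p (show i ≤ n + 1 by omega)]
      apply Real.rpow_le_rpow (powForm_base_pos a p ha n i hi).le
        (by linarith [ih (i + 1) (by omega) (by omega)]) (hp i hi).le
    · by_cases hin1 : i ≤ n + 1
      · rw [powForm_of_gt a p hin, powForm_of_le a p hin1]
        exact Real.rpow_nonneg (powForm_base_pos a p ha (n + 1) i hi).le _
      · rw [powForm_of_gt a p hin, powForm_of_gt a p hin1]

lemma powForm_mono (a p : ℕ → ℝ) (ha : ∀ n, 1 ≤ n → 0 < a n)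
    (hp : ∀ n, 1 ≤ n → 0 < p n) (n i : ℕ) (hi : 1 ≤ i) :
    powForm a p n i ≤ powForm a p (n + 1) i :=
  powForm_mono_aux a p ha hp n (n + 2 - i) i le_rfl hi

lemma denP_powForm (a p : ℕ → ℝ) (ha : ∀ n, 1 ≤ n → 0 < a n)
    (hp : ∀ n, 1 ≤ n → 0 < p n) (n : ℕ) :
    ∀ i, i ≤ n → denP a p i (powForm a p n 1) = powForm a p n (i + 1) := by
  intro i
  induction i with
  | zero => intro _; rfl
  | succ i ih =>
    intro hin
    rw [denP, ih (by omega), powForm_of_le a p (show i + 1 ≤ n by omega),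
      Real.rpow_rpow_inv (powForm_base_pos a p ha n (i + 1) (by omega)).le
        (hp (i + 1) (by omega)).ne']
    ring

lemma rpow_sub_rpow_le_concave {w z q : ℝ} (hw : 0 < w) (hwz : w ≤ z)
    (hq0 : 0 < q) (hq1 : q ≤ 1) :
    z ^ q - w ^ q ≤ q * w ^ (q - 1) * (z - w) := by
  have hz : 0 < z := lt_of_lt_of_le hw hwz
  have hb : (1 + (z / w - 1)) ^ q ≤ 1 + q * (z / w - 1) :=
    rpow_one_add_le_one_add_mul_self (by nlinarith [div_pos hz hw]) hq0.le hq1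
  rw [show (1 : ℝ) + (z / w - 1) = z / w by ring,
    Real.div_rpow hz.le hw.le] at hb
  have hwp : 0 < w ^ q := Real.rpow_pos_of_pos hw q
  have h1 : z ^ q ≤ w ^ q + q * w ^ q * (z / w - 1) := by
    have := mul_le_mul_of_nonneg_right hb hwp.le
    rw [div_mul_cancel₀ _ hwp.ne'] at this
    linarith [this]
  have h2 : w ^ q * (z / w) = w ^ (q - 1) * z := by
    rw [Real.rpow_sub hw, Real.rpow_one]
    field_simp
  have h3 : w ^ (q - 1) * w = w ^ q := by
    nth_rewrite 2 [show w = w ^ (1 : ℝ) from (Real.rpow_one w).symm]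
    rw [← Real.rpow_add hw]; ring_nf
  nlinarith [h1, h2, h3]

lemma rpow_sub_rpow_le_convex {w z q : ℝ} (hw : 0 < w) (hwz : w ≤ z)
    (hq : 1 ≤ q) :
    z ^ q - w ^ q ≤ q * z ^ (q - 1) * (z - w) := by
  have hz : 0 < z := lt_of_lt_of_le hw hwz
  have hb : 1 + q * (w / z - 1) ≤ (1 + (w / z - 1)) ^ q :=
    one_add_mul_self_le_rpow_one_add (by nlinarith [div_pos hw hz]) hq
  rw [show (1 : ℝ) + (w / z - 1) = w / z by ring,
    Real.div_rpow hw.le hz.le] at hb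
  have hzp : 0 < z ^ q := Real.rpow_pos_of_pos hz q
  have h1 : z ^ q + q * z ^ q * (w / z - 1) ≤ w ^ q := by
    have := mul_le_mul_of_nonneg_right hb hzp.le
    rw [div_mul_cancel₀ _ hzp.ne'] at this
    linarith [this]
  have h2 : z ^ q * (w / z) = z ^ (q - 1) * w := by
    rw [Real.rpow_sub hz, Real.rpow_one]
    field_simp
  have h3 : z ^ (q - 1) * z = z ^ q := by
    nth_rewrite 2 [show z = z ^ (1 : ℝ) from (Real.rpow_one z).symm]
    rw [← Real.rpow_add hz]; ring_nf
  nlinarith [h1, h2, h3]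

lemma main_aux (a p : ℕ → ℝ) (ha : ∀ n, 1 ≤ n → 0 < a n)
    (hp : ∀ n, 1 ≤ n → 0 < p n) (n : ℕ) (hn : 1 ≤ n) :
    ∀ k i, 1 ≤ i → i ≤ n + 1 → n + 1 - i ≤ k →
      powForm a p (n + 1) i - powForm a p n i ≤
        (a (n + 1)) ^ (p (n + 1)) *
          (∏ j ∈ (Finset.Icc i n).filter (fun j => p j ≤ 1),
            p j * (powForm a p n j) ^ ((p j - 1) / p j)) *
          (∏ j ∈ (Finset.Icc i n).filter (fun j => 1 < p j),
            p j * (powForm a p (n + 1) j) ^ ((p j - 1) / p j)) := by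
  intro k
  induction k with
  | zero =>
    intro i hi1 hi2 hk
    have hi : i = n + 1 := by omega
    subst hi
    rw [powForm_of_gt a p (show ¬ n + 1 ≤ n by omega),
      powForm_of_le a p (le_refl (n + 1)),
      powForm_of_gt a p (show ¬ n + 1 + 1 ≤ n + 1 by omega)]
    simp [Finset.Icc_eq_empty_of_lt (show n < n + 1 by omega)]
  | succ k ih =>
    intro i hi1 hi2 hk
    by_cases hin : i ≤ n
    case neg =>
      have hi : i = n + 1 := by omega
      subst hi
      rw [powForm_of_gt a p (show ¬ n + 1 ≤ n by omega),
        powForm_of_le a p (le_refl (n + 1)),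
        powForm_of_gt a p (show ¬ n + 1 + 1 ≤ n + 1 by omega)]
      simp [Finset.Icc_eq_empty_of_lt (show n < n + 1 by omega)]
    case pos =>
    -- notation
    set F := powForm a p n with hF
    set G := powForm a p (n + 1) with hG
    have hIH := ih (i + 1) (by omega) (by omega) (by omega)
    set A := (a (n + 1)) ^ (p (n + 1)) with hA
    set P := ∏ j ∈ (Finset.Icc (i + 1) n).filter (fun j => p j ≤ 1),
        p j * (F j) ^ ((p j - 1) / p j) with hP
    set Q := ∏ j ∈ (Finset.Icc (i + 1) n).filter (fun j => 1 < p j),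
        p j * (G j) ^ ((p j - 1) / p j) with hQ
    have hA0 : 0 ≤ A := Real.rpow_nonneg (ha (n + 1) (by omega)).le _
    have hP0 : 0 ≤ P := Finset.prod_nonneg (fun j hj => by
      simp only [Finset.mem_filter, Finset.mem_Icc] at hj
      exact mul_nonneg (hp j (by omega)).le
        (Real.rpow_nonneg (powForm_nonneg a p ha n j (by omega)) _))
    have hQ0 : 0 ≤ Q := Finset.prod_nonneg (fun j hj => by
      simp only [Finset.mem_filter, Finset.mem_Icc] at hj
      exact mul_nonneg (hp j (by omega)).le
        (Real.rpow_nonneg (powForm_nonneg a p ha (n + 1) j (by omega)) _))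
    have hIcc : Finset.Icc i n = insert i (Finset.Icc (i + 1) n) := by
      ext x; simp [Finset.mem_Icc]; omega
    have hnotmem : i ∉ Finset.Icc (i + 1) n := by simp
    -- base values
    have hw : 0 < a i + F (i + 1) := powForm_base_pos a p ha n i hi1
    have hz : 0 < a i + G (i + 1) := powForm_base_pos a p ha (n + 1) i hi1
    have hwz : a i + F (i + 1) ≤ a i + G (i + 1) := by
      linarith [powForm_mono a p ha hp n (i + 1) (by omega)]
    have hFi : F i = (a i + F (i + 1)) ^ (p i) := powForm_of_le a p hin
    have hGi : G i = (a i + G (i + 1)) ^ (p i) := powForm_of_le a p (by omega)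
    have hpi := hp i hi1
    have hexp : p i * ((p i - 1) / p i) = p i - 1 := by field_simp
    by_cases hcase : p i ≤ 1
    · -- concave case: factor joins P
      have hstep : G i - F i ≤
          p i * (F i) ^ ((p i - 1) / p i) * (G (i + 1) - F (i + 1)) := by
        have hb := rpow_sub_rpow_le_concave hw hwz hpi hcase
        have hrw : (F i) ^ ((p i - 1) / p i) = (a i + F (i + 1)) ^ (p i - 1) := by
          rw [hFi, ← Real.rpow_mul hw.le, hexp]
        rw [hrw, hFi, hGi]
        convert hb using 2 <;> ring
      have hc0 : 0 ≤ p i * (F i) ^ ((p i - 1) / p i) :=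
        mul_nonneg hpi.le (Real.rpow_nonneg (powForm_nonneg a p ha n i hi1) _)
      have h2 : G i - F i ≤ p i * (F i) ^ ((p i - 1) / p i) * (A * P * Q) :=
        le_trans hstep (mul_le_mul_of_nonneg_left hIH hc0)
      have hPins : ∏ j ∈ (Finset.Icc i n).filter (fun j => p j ≤ 1),
          p j * (F j) ^ ((p j - 1) / p j)
          = (p i * (F i) ^ ((p i - 1) / p i)) * P := by
        rw [hIcc, Finset.filter_insert, if_pos hcase,
          Finset.prod_insert (by simp)]
      have hQins : ∏ j ∈ (Finset.Icc i n).filter (fun j => 1 < p j),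
          p j * (G j) ^ ((p j - 1) / p j) = Q := by
        rw [hIcc, Finset.filter_insert, if_neg (by simpa using hcase)]
      rw [hPins, hQins]
      calc G i - F i ≤ p i * (F i) ^ ((p i - 1) / p i) * (A * P * Q) := h2
        _ = A * (p i * F i ^ ((p i - 1) / p i) * P) * Q := by ring
    · -- convex case: factor joins Q
      push_neg at hcase
      have hstep : G i - F i ≤
          p i * (G i) ^ ((p i - 1) / p i) * (G (i + 1) - F (i + 1)) := by
        have hb := rpow_sub_rpow_le_convex hw hwz hcase.le
        have hrw : (G i) ^ ((p i - 1) / p i) = (a i + G (i + 1)) ^ (p i - 1) := by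
          rw [hGi, ← Real.rpow_mul hz.le, hexp]
        rw [hrw, hFi, hGi]
        convert hb using 2 <;> ring
      have hc0 : 0 ≤ p i * (G i) ^ ((p i - 1) / p i) :=
        mul_nonneg hpi.le (Real.rpow_nonneg (powForm_nonneg a p ha (n + 1) i hi1) _)
      have h2 : G i - F i ≤ p i * (G i) ^ ((p i - 1) / p i) * (A * P * Q) :=
        le_trans hstep (mul_le_mul_of_nonneg_left hIH hc0)
      have hPins : ∏ j ∈ (Finset.Icc i n).filter (fun j => p j ≤ 1),
          p j * (F j) ^ ((p j - 1) / p j) = P := by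
        rw [hIcc, Finset.filter_insert, if_neg (by simpa using hcase.not_ge)]
      have hQins : ∏ j ∈ (Finset.Icc i n).filter (fun j => 1 < p j),
          p j * (G j) ^ ((p j - 1) / p j)
          = (p i * (G i) ^ ((p i - 1) / p i)) * Q := by
        rw [hIcc, Finset.filter_insert, if_pos hcase,
          Finset.prod_insert (by simp)]
      rw [hPins, hQins]
      calc G i - F i ≤ p i * (G i) ^ ((p i - 1) / p i) * (A * P * Q) := h2
        _ = A * P * (p i * G i ^ ((p i - 1) / p i) * Q) := by ring

theorem power_form_inequality (a : ℕ → ℝ) (p : ℕ → ℝ)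
    (ha : ∀ n, 1 ≤ n → 0 < a n) (hp : ∀ n, 1 ≤ n → 0 < p n) :
    ∀ n, 1 ≤ n →
      powForm a p (n + 1) 1 - powForm a p n 1 ≤
        (a (n + 1)) ^ (p (n + 1)) *
          (∏ i ∈ (Finset.Icc 1 n).filter (fun i => p i ≤ 1),
            p i * (denP a p (i - 1) (powForm a p n 1)) ^ ((p i - 1) / p i)) *
          (∏ i ∈ (Finset.Icc 1 n).filter (fun i => 1 < p i),
            p i * (denP a p (i - 1) (powForm a p (n + 1) 1)) ^ ((p i - 1) / p i)) := by
  intro n hn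
  have h := main_aux a p ha hp n hn (n + 1 - 1) 1 le_rfl (by omega) le_rfl
  have e1 : ∀ i ∈ (Finset.Icc 1 n).filter (fun i => p i ≤ 1),
      p i * (denP a p (i - 1) (powForm a p n 1)) ^ ((p i - 1) / p i)
      = p i * (powForm a p n i) ^ ((p i - 1) / p i) := by
    intro i hi
    simp only [Finset.mem_filter, Finset.mem_Icc] at hi
    rw [show denP a p (i - 1) (powForm a p n 1) = powForm a p n i by
      have := denP_powForm a p ha hp n (i - 1) (by omega)
      rwa [show i - 1 + 1 = i by omega] at this]
  have e2 : ∀ i ∈ (Finset.Icc 1 n).filter (fun i => 1 < p i),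
      p i * (denP a p (i - 1) (powForm a p (n + 1) 1)) ^ ((p i - 1) / p i)
      = p i * (powForm a p (n + 1) i) ^ ((p i - 1) / p i) := by
    intro i hi
    simp only [Finset.mem_filter, Finset.mem_Icc] at hi
    rw [show denP a p (i - 1) (powForm a p (n + 1) 1) = powForm a p (n + 1) i by
      have := denP_powForm a p ha hp (n + 1) (i - 1) (by omega)
      rwa [show i - 1 + 1 = i by omega] at this]
  rw [Finset.prod_congr rfl e1, Finset.prod_congr rfl e2]
  exact h
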